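/- Let D > 0. Let R(x, t) > 0 be C¹, let V_x, V_r be C¹ functions of (x, r, t) for 0 ≤ r ≤ R(x, t) satisfying the incompressibility condition ∂_r(r V_r) + r ∂_x V_x = 0 and the streamline condition ∂_t R + V_x(x, R, t) ∂_x R = V_r(x, R, t). Set Ṽ_x := V_x − ⟨V_x⟩, let η(x, r, t) be C¹ in (x, t), C² in r, set η̃ := η − ⟨η⟩, and let c₁(x, t) be C¹ and G₂(x, t) be continuous. Suppose there exists W₂(x, r, t), C² in r on (0, R], with r ∂_r W₂ → 0 as r → 0⁺ and ∂_r W₂(x, R, t) = 0, such that D(∂²_r W₂ + (1/r) ∂_r W₂) = ∂_t(c₁ η̃) + G₂ − η̃ ∂_x(c₁ ⟨V_x⟩) + V_x ∂_x(c₁ η̃) + V_r c₁ ∂_r η̃ for 0 < r < R(x, t). Then G₂(x, t) = −(1/R²) ∂_x ( c₁ ⟨R² η Ṽ_x⟩ ), where for fixed (x, t), ⟨R² η Ṽ_x⟩ = 2 ∫₀ᴿ η(x, r, t) Ṽ_x(x, r, t) r dr. -/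

import Mathlib

open Set Filter Topology

open intervalIntegral MeasureTheory

/-- The radial average over a cross section of radius `R(x,t)`:
`⟨f⟩(x,t) = (2/R(x,t)²) ∫₀^{R(x,t)} f(x,r,t) r dr`. -/
noncomputable def avgR (R : ℝ → ℝ → ℝ) (f : ℝ → ℝ → ℝ → ℝ) (x t : ℝ) : ℝ :=
  (2 / (R x t) ^ 2) * ∫ r in (0:ℝ)..(R x t), f x r t * r

private lemma hasDerivAt_slice1 {F : ℝ × ℝ → ℝ} (hF : ContDiff ℝ 1 F) (a b : ℝ) :
    HasDerivAt (fun x => F (x, b)) (fderiv ℝ F (a, b) (1, 0)) a := by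
  have h := (hF.differentiable one_ne_zero (a, b)).hasFDerivAt
  have hc : HasDerivAt (fun x : ℝ => (x, b)) ((1 : ℝ), (0 : ℝ)) a :=
    (hasDerivAt_id a).prodMk (hasDerivAt_const a b)
  exact h.comp_hasDerivAt a hc

private lemma hasDerivAt_slice2 {F : ℝ × ℝ → ℝ} (hF : ContDiff ℝ 1 F) (a b : ℝ) :
    HasDerivAt (fun y => F (a, y)) (fderiv ℝ F (a, b) (0, 1)) b := by
  have h := (hF.differentiable one_ne_zero (a, b)).hasFDerivAt
  have hc : HasDerivAt (fun y : ℝ => (a, y)) ((0 : ℝ), (1 : ℝ)) b :=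
    (hasDerivAt_const b a).prodMk (hasDerivAt_id b)
  exact h.comp_hasDerivAt b hc

private lemma cont_partial {F : ℝ × ℝ → ℝ} (hF : ContDiff ℝ 1 F) (v : ℝ × ℝ) :
    Continuous (fun p : ℝ × ℝ => fderiv ℝ F p v) :=
  (hF.continuous_fderiv one_ne_zero).clm_apply continuous_const

/-- change of variables r = ρ * s -/
private lemma cov (f : ℝ → ℝ) {ρ : ℝ} (hρ : 0 < ρ) :
    ∫ s in (0:ℝ)..1, f (ρ * s) * (ρ ^ 2 * s) = ∫ r in (0:ℝ)..ρ, f r * r := by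
  have h := intervalIntegral.integral_comp_mul_left (a := (0:ℝ)) (b := 1)
    (fun r => f r * r) (ne_of_gt hρ)
  have h2 : ∫ s in (0:ℝ)..1, f (ρ * s) * (ρ * s) = ρ⁻¹ * ∫ r in (0:ℝ)..ρ, f r * r := by
    simpa using h
  have h3 : (fun s : ℝ => f (ρ * s) * (ρ ^ 2 * s)) =
      fun s : ℝ => ρ * (f (ρ * s) * (ρ * s)) := by
    funext s; ring
  rw [h3, intervalIntegral.integral_const_mul, h2]
  field_simp

/-- Leibniz rule for `x ↦ ∫_0^{ρ x} F (x,r) r dr` with moving boundary. -/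
private lemma leibniz {F : ℝ × ℝ → ℝ} (hF : ContDiff ℝ 1 F) {ρ : ℝ → ℝ}
    (hρ : ContDiff ℝ 1 ρ) (hρpos : ∀ x, 0 < ρ x) (x₀ : ℝ) :
    HasDerivAt (fun x => ∫ r in (0:ℝ)..ρ x, F (x, r) * r)
      ((∫ r in (0:ℝ)..ρ x₀, (fderiv ℝ F (x₀, r) (1, 0)) * r)
        + F (x₀, ρ x₀) * ρ x₀ * deriv ρ x₀) x₀ := by
  have hρd : ∀ x, HasDerivAt ρ (deriv ρ x) x :=
    fun x => (hρ.differentiable one_ne_zero x).hasDerivAt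
  -- the rescaled integrand
  set g : ℝ × ℝ → ℝ := fun p => F (p.1, ρ p.1 * p.2) * ((ρ p.1) ^ 2 * p.2) with hg_def
  have hg : ContDiff ℝ 1 g := by
    apply ContDiff.mul
    · exact hF.comp (contDiff_fst.prodMk ((hρ.comp contDiff_fst).mul contDiff_snd))
    · exact ((hρ.comp contDiff_fst).pow 2).mul contDiff_snd
  -- change of variables identity
  have key : ∀ x, (∫ r in (0:ℝ)..ρ x, F (x, r) * r) = ∫ s in (0:ℝ)..1, g (x, s) := by
    intro x
    rw [← cov (fun r => F (x, r)) (hρpos x)]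
  -- derivative of g in the first variable, explicit formula
  have hgd : ∀ x s, HasDerivAt (fun x' => g (x', s))
      (fderiv ℝ F (x, ρ x * s) (1, deriv ρ x * s) * ((ρ x) ^ 2 * s)
        + F (x, ρ x * s) * ((2 * ρ x ^ 1 * deriv ρ x) * s)) x := by
    intro x s
    have h1 : HasDerivAt (fun x' => F (x', ρ x' * s))
        (fderiv ℝ F (x, ρ x * s) (1, deriv ρ x * s)) x := by
      have hc : HasDerivAt (fun x' : ℝ => (x', ρ x' * s)) ((1 : ℝ), deriv ρ x * s) x :=
        (hasDerivAt_id x).prodMk ((hρd x).mul_const s)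
      exact ((hF.differentiable one_ne_zero _).hasFDerivAt).comp_hasDerivAt x hc
    have h2 : HasDerivAt (fun x' => (ρ x') ^ 2 * s)
        ((2 * ρ x ^ 1 * deriv ρ x) * s) x := ((hρd x).pow 2).mul_const s
    exact h1.mul h2
  -- dominated-derivative step
  have hc1 : Continuous fun p : ℝ × ℝ => fderiv ℝ g p (1, 0) := cont_partial hg (1, 0)
  obtain ⟨C, hC⟩ : ∃ C, ∀ p ∈ (Icc (x₀ - 1) (x₀ + 1) ×ˢ Icc (0:ℝ) 1),
      ‖fderiv ℝ g p (1, 0)‖ ≤ C :=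
    (isCompact_Icc.prod isCompact_Icc).exists_bound_of_continuousOn hc1.continuousOn
  have main : HasDerivAt (fun x => ∫ s in (0:ℝ)..1, g (x, s))
      (∫ s in (0:ℝ)..1, fderiv ℝ g (x₀, s) (1, 0)) x₀ := by
    have := intervalIntegral.hasDerivAt_integral_of_dominated_loc_of_deriv_le
      (μ := MeasureTheory.volume)
      (F := fun x s => g (x, s)) (F' := fun x s => fderiv ℝ g (x, s) (1, 0))
      (x₀ := x₀) (a := (0:ℝ)) (b := 1) (bound := fun _ => C) (s := Metric.ball x₀ 1) (Metric.ball_mem_nhds x₀ one_pos)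
      ?_ ?_ ?_ ?_ ?_ ?_
    · exact this.2
    · filter_upwards with x
      exact (hg.continuous.comp (Continuous.prodMk_right x)).aestronglyMeasurable
    · exact ((hg.continuous.comp (Continuous.prodMk_right x₀)).intervalIntegrable 0 1)
    · exact (hc1.comp (Continuous.prodMk_right x₀)).aestronglyMeasurable
    · filter_upwards with s hs x hx
      apply hC
      constructor
      · have := abs_lt.1 (by simpa [Real.dist_eq] using (Metric.mem_ball.1 hx))
        constructor <;> linarith [this.1, this.2]
      · rw [Set.uIoc_of_le (by norm_num : (0:ℝ) ≤ 1)] at hs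
        exact ⟨le_of_lt hs.1, hs.2⟩
    · exact intervalIntegrable_const
    · filter_upwards with s hs x hx
      have h1 := hgd x s
      have h2 := hasDerivAt_slice1 hg x s
      rwa [h1.unique h2] at h1
  -- identify the derivative value
  have hval : (∫ s in (0:ℝ)..1, fderiv ℝ g (x₀, s) (1, 0))
      = (∫ r in (0:ℝ)..ρ x₀, (fderiv ℝ F (x₀, r) (1, 0)) * r)
        + F (x₀, ρ x₀) * ρ x₀ * deriv ρ x₀ := by
    have hrepr : ∀ s : ℝ, fderiv ℝ g (x₀, s) (1, 0)
        = (fun s => fderiv ℝ F (x₀, ρ x₀ * s) (1, 0) * ((ρ x₀) ^ 2 * s)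
          + (deriv ρ x₀ * ρ x₀) * (fderiv ℝ F (x₀, ρ x₀ * s) (0, 1) * (ρ x₀ * s ^ 2)
            + F (x₀, ρ x₀ * s) * (2 * s))) s := by
      intro s
      have h1 := hgd x₀ s
      have h2 := hasDerivAt_slice1 hg x₀ s
      rw [← h1.unique h2]
      have hlin : ((1 : ℝ), deriv ρ x₀ * s) = (1, 0) + (deriv ρ x₀ * s) • ((0 : ℝ), (1 : ℝ)) := by
        simp
      rw [hlin, ContinuousLinearMap.map_add, ContinuousLinearMap.map_smul]
      simp only [smul_eq_mul]
      ring
    rw [intervalIntegral.integral_congr (fun s _ => hrepr s)]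
    have cF1 : Continuous fun s : ℝ => fderiv ℝ F (x₀, ρ x₀ * s) (1, 0) :=
      (cont_partial hF (1, 0)).comp (by fun_prop)
    have cF2 : Continuous fun s : ℝ => fderiv ℝ F (x₀, ρ x₀ * s) (0, 1) :=
      (cont_partial hF (0, 1)).comp (by fun_prop)
    have cF : Continuous fun s : ℝ => F (x₀, ρ x₀ * s) :=
      hF.continuous.comp (by fun_prop)
    have c_int1 : Continuous fun s : ℝ =>
        fderiv ℝ F (x₀, ρ x₀ * s) (1, 0) * ((ρ x₀) ^ 2 * s) := cF1.mul (by fun_prop)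
    have c_int2 : Continuous fun s : ℝ => (deriv ρ x₀ * ρ x₀) *
        (fderiv ℝ F (x₀, ρ x₀ * s) (0, 1) * (ρ x₀ * s ^ 2) + F (x₀, ρ x₀ * s) * (2 * s)) :=
      continuous_const.mul ((cF2.mul (by fun_prop)).add (cF.mul (by fun_prop)))
    rw [intervalIntegral.integral_add (c_int1.intervalIntegrable 0 1)
      (c_int2.intervalIntegrable 0 1)]
    congr 1
    · exact cov (fun r => fderiv ℝ F (x₀, r) (1, 0)) (hρpos x₀)
    · rw [intervalIntegral.integral_const_mul]
      -- FTC for s ↦ s² F(x₀, ρ s)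
      have hftc : ∀ s ∈ Set.uIcc (0:ℝ) 1,
          HasDerivAt (fun s : ℝ => s ^ 2 * F (x₀, ρ x₀ * s))
            (2 * s ^ 1 * F (x₀, ρ x₀ * s)
              + s ^ 2 * (fderiv ℝ F (x₀, ρ x₀ * s) (0, 1) * ρ x₀)) s := by
        intro s _
        have hc : HasDerivAt (fun s : ℝ => F (x₀, ρ x₀ * s))
            (fderiv ℝ F (x₀, ρ x₀ * s) (0, 1) * ρ x₀) s := by
          have hcurve : HasDerivAt (fun s : ℝ => (x₀, ρ x₀ * s)) ((0 : ℝ), ρ x₀) s := by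
            exact (hasDerivAt_const s x₀).prodMk (by simpa using (hasDerivAt_id s).const_mul (ρ x₀))
          have := ((hF.differentiable one_ne_zero _).hasFDerivAt).comp_hasDerivAt s hcurve
          have hv : ((0:ℝ), ρ x₀) = (ρ x₀) • ((0:ℝ), (1:ℝ)) := by simp
          rwa [hv, ContinuousLinearMap.map_smul, smul_eq_mul, mul_comm] at this
        exact (hasDerivAt_pow 2 s).mul hc
      have c_int3 : Continuous fun s : ℝ => 2 * s ^ 1 * F (x₀, ρ x₀ * s)
          + s ^ 2 * (fderiv ℝ F (x₀, ρ x₀ * s) (0, 1) * ρ x₀) :=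
        ((by fun_prop : Continuous fun s : ℝ => 2 * s ^ 1).mul cF).add
          ((by fun_prop : Continuous fun s : ℝ => s ^ 2).mul (cF2.mul continuous_const))
      have := intervalIntegral.integral_eq_sub_of_hasDerivAt hftc
        (c_int3.intervalIntegrable 0 1)
      have heq : ∀ s : ℝ, fderiv ℝ F (x₀, ρ x₀ * s) (0, 1) * (ρ x₀ * s ^ 2)
          + F (x₀, ρ x₀ * s) * (2 * s)
          = 2 * s ^ 1 * F (x₀, ρ x₀ * s)
            + s ^ 2 * (fderiv ℝ F (x₀, ρ x₀ * s) (0, 1) * ρ x₀) := by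
        intro s; ring
      rw [intervalIntegral.integral_congr (fun s _ => heq s), this]
      simp
      ring
  rw [← hval]
  exact main.congr_of_eventuallyEq (Filter.Eventually.of_forall key)

/-- The key vanishing: integrating `D(W'' + W'/r)·r` over `(0,ρ)` gives zero, so the
integral of the PDE right-hand side (times `r`) vanishes. -/
private lemma ftc_zero {ρ D : ℝ} (hρ : 0 < ρ) (hD : 0 < D) {W : ℝ → ℝ}
    (hWs : ContDiffOn ℝ 2 W (Ioc 0 ρ))
    (hlim : Tendsto (fun r => r * deriv W r) (𝓝[>] 0) (𝓝 0))
    (hneu : derivWithin W (Icc 0 ρ) ρ = 0)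
    {Q : ℝ → ℝ} (hQ : Continuous Q)
    (hpde : ∀ r ∈ Ioo 0 ρ, D * (deriv (deriv W) r + (1 / r) * deriv W r) = Q r) :
    ∫ r in (0:ℝ)..ρ, Q r * r = 0 := by
  set Wd : ℝ → ℝ := derivWithin W (Ioc 0 ρ) with hWd_def
  set h : ℝ → ℝ := fun r => if r ≤ 0 then 0 else r * Wd r with hh_def
  have hWdco : ContinuousOn Wd (Ioc 0 ρ) :=
    (hWs.derivWithin (m := 1) (uniqueDiffOn_Ioc 0 ρ) (by norm_num)).continuousOn
  have hmemnh : ∀ r ∈ Ioo 0 ρ, Ioc 0 ρ ∈ 𝓝 r := fun r hr =>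
    mem_nhds_iff.2 ⟨Ioo 0 ρ, Ioo_subset_Ioc_self, isOpen_Ioo, hr⟩
  have hWdeq : ∀ r ∈ Ioo 0 ρ, Wd r = deriv W r := fun r hr =>
    derivWithin_of_mem_nhds (hmemnh r hr)
  have hd2 : ∀ r ∈ Ioo 0 ρ, HasDerivAt (deriv W) (deriv (deriv W) r) r := by
    intro r hr
    have hat : ContDiffAt ℝ 2 W r := hWs.contDiffAt (hmemnh r hr)
    obtain ⟨u, hu, hcd⟩ := hat.contDiffOn (le_refl 2) (by simp)
    have h2 : ContDiffOn ℝ 1 (deriv W) (interior u) :=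
      (hcd.mono interior_subset).deriv_of_isOpen isOpen_interior (by norm_num)
    exact ((h2.differentiableOn (by norm_num)).differentiableAt
      (isOpen_interior.mem_nhds (mem_interior_iff_mem_nhds.2 hu))).hasDerivAt
  have hIccIoc : ∀ r : ℝ, 0 < r → Icc 0 ρ =ᶠ[𝓝 r] Ioc 0 ρ := by
    intro r hr
    rw [Filter.eventuallyEq_set]
    filter_upwards [isOpen_Ioi.mem_nhds hr] with y hy
    simp only [Set.mem_Icc, Set.mem_Ioc, Set.mem_Ioi] at *
    constructor
    · rintro ⟨_, h2⟩; exact ⟨hy, h2⟩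
    · rintro ⟨h1, h2⟩; exact ⟨le_of_lt h1, h2⟩
  have hcont : ContinuousOn h (Icc 0 ρ) := by
    intro r hr
    rcases eq_or_lt_of_le hr.1 with h0 | hpos
    · subst h0
      have hIcc : Icc (0:ℝ) ρ = insert 0 (Ioc 0 ρ) := by
        ext y
        simp only [Set.mem_Icc, Set.mem_insert_iff, Set.mem_Ioc]
        constructor
        · rintro ⟨h1, h2⟩
          rcases eq_or_lt_of_le h1 with h | h
          · exact Or.inl h.symm
          · exact Or.inr ⟨h, h2⟩
        · rintro (rfl | ⟨h1, h2⟩)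
          · exact ⟨le_rfl, le_of_lt hρ⟩
          · exact ⟨le_of_lt h1, h2⟩
      unfold ContinuousWithinAt
      have h00 : h 0 = 0 := by simp [hh_def]
      rw [hIcc, nhdsWithin_insert, h00]
      refine Tendsto.sup ?_ ?_
      · have := tendsto_pure_nhds h 0
        rwa [h00] at this
      · have hev : h =ᶠ[𝓝[>] (0:ℝ)] fun r => r * deriv W r := by
          filter_upwards [Ioo_mem_nhdsGT hρ] with y hy
          simp only [hh_def, if_neg (not_le.2 hy.1)]
          rw [hWdeq y hy]
        exact (hlim.congr' hev.symm).mono_left (nhdsWithin_mono _ Set.Ioc_subset_Ioi_self)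
    · have hIoc : ContinuousWithinAt h (Ioc 0 ρ) r := by
        refine ((continuousWithinAt_id.mul (hWdco r ⟨hpos, hr.2⟩)).congr ?_ ?_)
        · intro y hy; simp [hh_def, if_neg (not_le.2 hy.1)]
        · simp [hh_def, if_neg (not_le.2 hpos)]
      unfold ContinuousWithinAt at hIoc ⊢
      rwa [nhdsWithin_eq_iff_eventuallyEq.2 (hIccIoc r hpos)]
  have hderiv : ∀ r ∈ Ioo 0 ρ, HasDerivWithinAt h (Q r * r / D) (Ioi r) r := by
    intro r hr
    have hφ : HasDerivAt (fun y => y * deriv W y)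
        (1 * deriv W r + r * deriv (deriv W) r) r := (hasDerivAt_id r).mul (hd2 r hr)
    have heq : h =ᶠ[𝓝 r] fun y => y * deriv W y := by
      filter_upwards [isOpen_Ioo.mem_nhds hr] with y hy
      simp only [hh_def, if_neg (not_le.2 hy.1)]
      rw [hWdeq y hy]
    have hh : HasDerivAt h (1 * deriv W r + r * deriv (deriv W) r) r :=
      hφ.congr_of_eventuallyEq heq
    have hval : 1 * deriv W r + r * deriv (deriv W) r = Q r * r / D := by
      have key := hpde r hr
      have hr0 : r ≠ 0 := ne_of_gt hr.1
      have e1 : Q r * r = D * (deriv (deriv W) r * r + deriv W r) := by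
        rw [← key]; field_simp
      rw [e1]; field_simp [hD.ne']; ring
    rw [← hval]
    exact hh.hasDerivWithinAt
  have hint : IntervalIntegrable (fun r => Q r * r / D) MeasureTheory.volume 0 ρ :=
    ((hQ.mul continuous_id).div_const D).intervalIntegrable 0 ρ
  have hftc := intervalIntegral.integral_eq_sub_of_hasDeriv_right_of_le hρ.le hcont hderiv hint
  have hWdρ : Wd ρ = 0 := by
    rw [hWd_def, derivWithin_congr_set (hIccIoc ρ hρ).symm, hneu]
  have hρval : h ρ = 0 := by simp [hh_def, if_neg (not_le.2 hρ), hWdρ]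
  have h0val : h 0 = 0 := by simp [hh_def]
  rw [hρval, h0val, sub_zero] at hftc
  have hdiv : ∫ r in (0:ℝ)..ρ, Q r * r / D = (∫ r in (0:ℝ)..ρ, Q r * r) / D :=
    intervalIntegral.integral_div D (fun r => Q r * r)
  rw [hdiv, div_eq_zero_iff] at hftc
  rcases hftc with hftc | hftc
  · exact hftc
  · exact absurd hftc hD.ne'

private lemma final_algebra
    (J1 J2 J3 J3a J4 J5 J6 N Mη I2x c ρ ρx ρt ηR VxR VrR F2R F3R F4R KK a G2v Dtv Dxv Tv : ℝ)
    (hρ : ρ ≠ 0)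
    (hstream : ρt + VxR * ρx = VrR)
    (ha : a = 2 * Mη / ρ ^ 2)
    (hI2x : I2x = c * Mη)
    (hF2R : F2R = c * ηR) (hF3R : F3R = c * ηR * VxR) (hF4R : F4R = VxR)
    (hJ3 : J3 = J3a + c * J6)
    (hJ4 : J4 = -(ρ * VrR))
    (hJ5 : J5 = ρ * VrR * ηR + J6)
    (hDtv : Dtv = -(4 * ρt / ρ ^ 3) * I2x + 2 / ρ ^ 2 * (J1 + F2R * ρ * ρt))
    (hDxv : Dxv = -(4 * ρx / ρ ^ 3) * I2x + 2 / ρ ^ 2 * (J2 + F2R * ρ * ρx))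
    (hTv : Tv = 2 * (J3 + F3R * ρ * ρx)
      - ((-(4 * ρx / ρ ^ 3) * N + 2 / ρ ^ 2 * (J4 + F4R * ρ * ρx)) * (2 * I2x)
        + 2 / ρ ^ 2 * N * (2 * (J2 + F2R * ρ * ρx))))
    (hkey : 0 = J1 - Dtv * (ρ ^ 2 / 2) + G2v * (ρ ^ 2 / 2) - KK * Mη + KK * (a * (ρ ^ 2 / 2))
      + J3a - Dxv * N + c * J5) :
    G2v = -(1 / ρ ^ 2) * Tv := by
  subst ha hI2x hF2R hF3R hF4R hJ3 hJ4 hJ5 hDtv hDxv hTv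
  subst hstream
  have h2 : G2v * (ρ^2/2) = -(J1
      - (-(4 * ρt / ρ ^ 3) * (c * Mη) + 2 / ρ ^ 2 * (J1 + c * ηR * ρ * ρt)) * (ρ ^ 2 / 2)
      - KK * Mη + KK * (2 * Mη / ρ ^ 2 * (ρ ^ 2 / 2)) + J3a
      - (-(4 * ρx / ρ ^ 3) * (c * Mη) + 2 / ρ ^ 2 * (J2 + c * ηR * ρ * ρx)) * N
      + c * (ρ * (ρt + F4R * ρx) * ηR + J6)) := by linarith [hkey]
  have h3 : G2v = -(2/ρ^2) * (J1
      - (-(4 * ρt / ρ ^ 3) * (c * Mη) + 2 / ρ ^ 2 * (J1 + c * ηR * ρ * ρt)) * (ρ ^ 2 / 2)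
      - KK * Mη + KK * (2 * Mη / ρ ^ 2 * (ρ ^ 2 / 2)) + J3a
      - (-(4 * ρx / ρ ^ 3) * (c * Mη) + 2 / ρ ^ 2 * (J2 + c * ηR * ρ * ρx)) * N
      + c * (ρ * (ρt + F4R * ρx) * ηR + J6)) := by
    field_simp at h2 ⊢
    linarith [h2]
  rw [h3]
  field_simp
  ring

/-- Solvability condition determining the second-order coefficient `G₂`.
Under the incompressibility and streamline conditions, if there is `W₂` (C² in `r` on
`(0, R]`, with `r ∂_r W₂ → 0` as `r → 0⁺` and `∂_r W₂(x,R,t) = 0`) such that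
`D (∂²_r W₂ + (1/r) ∂_r W₂) = ∂_t(c₁ η̃) + G₂ - η̃ ∂ₓ(c₁ ⟨Vx⟩) + Vx ∂ₓ(c₁ η̃) + Vr c₁ ∂_r η̃`
for `0 < r < R(x,t)`, where `η̃ := η - ⟨η⟩` and `Ṽx := Vx - ⟨Vx⟩`, then
`G₂(x,t) = -(1/R²) ∂ₓ ( c₁ ⟨R² η Ṽx⟩ )` with `⟨R² η Ṽx⟩ = 2 ∫₀ᴿ η Ṽx r dr`. -/
theorem solvability_condition_G2
    (D : ℝ) (hD : 0 < D)
    (R : ℝ → ℝ → ℝ) (hRpos : ∀ x t, 0 < R x t)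
    (hRsm : ContDiff ℝ 1 (fun p : ℝ × ℝ => R p.1 p.2))
    (Vx Vr η W₂ : ℝ → ℝ → ℝ → ℝ) (c₁ G₂ : ℝ → ℝ → ℝ)
    (hVx : ContDiff ℝ 1 (fun p : ℝ × ℝ × ℝ => Vx p.1 p.2.1 p.2.2))
    (hVr : ContDiff ℝ 1 (fun p : ℝ × ℝ × ℝ => Vr p.1 p.2.1 p.2.2))
    (hincomp : ∀ x t r, 0 < r → r < R x t →
      deriv (fun r' => r' * Vr x r' t) r + r * deriv (fun x' => Vx x' r t) x = 0)
    (hstream : ∀ x t,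
      deriv (fun t' => R x t') t + Vx x (R x t) t * deriv (fun x' => R x' t) x
        = Vr x (R x t) t)
    (hη1 : ContDiff ℝ 1 (fun p : ℝ × ℝ × ℝ => η p.1 p.2.1 p.2.2))
    (hη2 : ∀ x t, ContDiff ℝ 2 (fun r => η x r t))
    (hc₁ : ContDiff ℝ 1 (fun p : ℝ × ℝ => c₁ p.1 p.2))
    (hG₂ : Continuous (fun p : ℝ × ℝ => G₂ p.1 p.2))
    (hW₂smooth : ∀ x t, ContDiffOn ℝ 2 (fun r => W₂ x r t) (Set.Ioc 0 (R x t)))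
    (hW₂lim : ∀ x t, Tendsto (fun r => r * deriv (fun r' => W₂ x r' t) r)
      (𝓝[>] 0) (𝓝 0))
    (hW₂neu : ∀ x t,
      derivWithin (fun r' => W₂ x r' t) (Set.Icc 0 (R x t)) (R x t) = 0)
    (hpde : ∀ x t r, 0 < r → r < R x t →
      D * (deriv (deriv (fun r' => W₂ x r' t)) r
          + (1 / r) * deriv (fun r' => W₂ x r' t) r)
        = deriv (fun t' => c₁ x t' * (η x r t' - avgR R η x t')) t
          + G₂ x t
          - (η x r t - avgR R η x t) * deriv (fun x' => c₁ x' t * avgR R Vx x' t) x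
          + Vx x r t * deriv (fun x' => c₁ x' t * (η x' r t - avgR R η x' t)) x
          + Vr x r t * c₁ x t * deriv (fun r' => η x r' t - avgR R η x t) r) :
    ∀ x t, G₂ x t = -(1 / (R x t) ^ 2) *
      deriv (fun x' => c₁ x' t *
        (2 * ∫ r in (0:ℝ)..(R x' t),
          η x' r t * (Vx x' r t - avgR R Vx x' t) * r)) x := by
  intro x t
  have hρ0 : 0 < R x t := hRpos x t
  have hρne : R x t ≠ 0 := hρ0.ne'
  -- slice smoothness of R
  have hρfun : ContDiff ℝ 1 (fun x' => R x' t) :=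
    hRsm.comp (contDiff_id.prodMk contDiff_const)
  have hρfunT : ContDiff ℝ 1 (fun t' => R x t') :=
    hRsm.comp (contDiff_const.prodMk contDiff_id)
  have hRdx : HasDerivAt (fun x' => R x' t) (deriv (fun x' => R x' t) x) x :=
    (hρfun.differentiable one_ne_zero x).hasDerivAt
  have hRdt : HasDerivAt (fun t' => R x t') (deriv (fun t' => R x t') t) t :=
    (hρfunT.differentiable one_ne_zero t).hasDerivAt
  -- the two-variable slice functions
  set F₂ : ℝ × ℝ → ℝ := fun p => c₁ p.1 t * η p.1 p.2 t with hF₂def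
  set F₃ : ℝ × ℝ → ℝ := fun p => c₁ p.1 t * η p.1 p.2 t * Vx p.1 p.2 t with hF₃def
  set F₄ : ℝ × ℝ → ℝ := fun p => Vx p.1 p.2 t with hF₄def
  set Fk : ℝ × ℝ → ℝ := fun q => c₁ x q.1 * η x q.2 q.1 with hFkdef
  set Fηr : ℝ × ℝ → ℝ := fun q => η x q.2 q.1 with hFηrdef
  set FVr : ℝ × ℝ → ℝ := fun q => Vr x q.2 q.1 with hFVrdef
  have hc₁x : ContDiff ℝ 1 (fun p : ℝ × ℝ => c₁ p.1 t) :=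
    hc₁.comp (contDiff_fst.prodMk contDiff_const)
  have hηx : ContDiff ℝ 1 (fun p : ℝ × ℝ => η p.1 p.2 t) :=
    hη1.comp (contDiff_fst.prodMk (contDiff_snd.prodMk contDiff_const))
  have hF₄c : ContDiff ℝ 1 F₄ :=
    hVx.comp (contDiff_fst.prodMk (contDiff_snd.prodMk contDiff_const))
  have hF₂c : ContDiff ℝ 1 F₂ := hc₁x.mul hηx
  have hF₃c : ContDiff ℝ 1 F₃ := hF₂c.mul hF₄c
  have hFkc : ContDiff ℝ 1 Fk :=
    (hc₁.comp (contDiff_const.prodMk contDiff_fst)).mul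
      (hη1.comp (contDiff_const.prodMk (contDiff_snd.prodMk contDiff_fst)))
  have hFηrc : ContDiff ℝ 1 Fηr :=
    hη1.comp (contDiff_const.prodMk (contDiff_snd.prodMk contDiff_fst))
  have hFVrc : ContDiff ℝ 1 FVr :=
    hVr.comp (contDiff_const.prodMk (contDiff_snd.prodMk contDiff_fst))
  -- Leibniz rules (with beta-reduced types)
  have hI2 : HasDerivAt (fun x' => ∫ r in (0:ℝ)..R x' t, F₂ (x', r) * r)
      ((∫ r in (0:ℝ)..R x t, fderiv ℝ F₂ (x, r) (1, 0) * r)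
        + F₂ (x, R x t) * R x t * deriv (fun x' => R x' t) x) x :=
    leibniz hF₂c hρfun (fun x' => hRpos x' t) x
  have hI3 : HasDerivAt (fun x' => ∫ r in (0:ℝ)..R x' t, F₃ (x', r) * r)
      ((∫ r in (0:ℝ)..R x t, fderiv ℝ F₃ (x, r) (1, 0) * r)
        + F₃ (x, R x t) * R x t * deriv (fun x' => R x' t) x) x :=
    leibniz hF₃c hρfun (fun x' => hRpos x' t) x
  have hI4 : HasDerivAt (fun x' => ∫ r in (0:ℝ)..R x' t, F₄ (x', r) * r)
      ((∫ r in (0:ℝ)..R x t, fderiv ℝ F₄ (x, r) (1, 0) * r)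
        + F₄ (x, R x t) * R x t * deriv (fun x' => R x' t) x) x :=
    leibniz hF₄c hρfun (fun x' => hRpos x' t) x
  have hK2 : HasDerivAt (fun t' => ∫ r in (0:ℝ)..R x t', Fk (t', r) * r)
      ((∫ r in (0:ℝ)..R x t, fderiv ℝ Fk (t, r) (1, 0) * r)
        + Fk (t, R x t) * R x t * deriv (fun t' => R x t') t) t :=
    leibniz hFkc hρfunT (fun t' => hRpos x t') t
  set ρx := deriv (fun x' => R x' t) x with hρxdef
  set ρt := deriv (fun t' => R x t') t with hρtdef
  set J1 := ∫ r in (0:ℝ)..R x t, fderiv ℝ Fk (t, r) (1, 0) * r with hJ1def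
  set J2 := ∫ r in (0:ℝ)..R x t, fderiv ℝ F₂ (x, r) (1, 0) * r with hJ2def
  set J3i := ∫ r in (0:ℝ)..R x t, fderiv ℝ F₃ (x, r) (1, 0) * r with hJ3idef
  set J4i := ∫ r in (0:ℝ)..R x t, fderiv ℝ F₄ (x, r) (1, 0) * r with hJ4idef
  set Mη := ∫ r in (0:ℝ)..R x t, η x r t * r with hMηdef
  set N := ∫ r in (0:ℝ)..R x t, Vx x r t * r with hNdef
  set I2x := ∫ r in (0:ℝ)..R x t, F₂ (x, r) * r with hI2xdef
  -- pulling constants out of the integrals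
  have hpull : ∀ x', (∫ r in (0:ℝ)..R x' t, F₂ (x', r) * r)
      = c₁ x' t * ∫ r in (0:ℝ)..R x' t, η x' r t * r := by
    intro x'
    rw [← intervalIntegral.integral_const_mul]
    refine intervalIntegral.integral_congr fun r _ => ?_
    simp only [hF₂def]; ring
  have hpullk : ∀ t', (∫ r in (0:ℝ)..R x t', Fk (t', r) * r)
      = c₁ x t' * ∫ r in (0:ℝ)..R x t', η x r t' * r := by
    intro t'
    rw [← intervalIntegral.integral_const_mul]
    refine intervalIntegral.integral_congr fun r _ => ?_
    simp only [hFkdef]; ring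
  have hI2cM : I2x = c₁ x t * Mη := by rw [hI2xdef, hMηdef]; exact hpull x
  have hI2keq : (∫ r in (0:ℝ)..R x t, Fk (t, r) * r) = I2x := by rw [hI2xdef]
  have hI4N : (∫ r in (0:ℝ)..R x t, F₄ (x, r) * r) = N := by rw [hNdef]
  -- boundary values
  have hFkR : Fk (t, R x t) = F₂ (x, R x t) := by simp only [hFkdef, hF₂def]
  have hF2R : F₂ (x, R x t) = c₁ x t * η x (R x t) t := by simp only [hF₂def]
  have hF3R : F₃ (x, R x t) = c₁ x t * η x (R x t) t * Vx x (R x t) t := by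
    simp only [hF₃def]
  have hF4R : F₄ (x, R x t) = Vx x (R x t) t := by simp only [hF₄def]
  -- derivative of x' ↦ 2/(R x' t)^2 and t-analogue
  have h2ρx : HasDerivAt (fun x' => 2 / (R x' t) ^ 2) (-(4 * ρx / (R x t) ^ 3)) x := by
    have h := (hasDerivAt_const x (2:ℝ)).div (hRdx.pow 2) (pow_ne_zero 2 hρne)
    refine h.congr_deriv ?_
    rw [hρxdef]
    simp only [Pi.pow_apply]
    field_simp
    ring
  have h2ρt : HasDerivAt (fun t' => 2 / (R x t') ^ 2) (-(4 * ρt / (R x t) ^ 3)) t := by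
    have h := (hasDerivAt_const t (2:ℝ)).div (hRdt.pow 2) (pow_ne_zero 2 hρne)
    refine h.congr_deriv ?_
    rw [hρtdef]
    simp only [Pi.pow_apply]
    field_simp
    ring
  -- derivative values for c₁ ⬝ ⟨η⟩
  set Dxv := -(4 * ρx / (R x t) ^ 3) * I2x
      + 2 / (R x t) ^ 2 * (J2 + F₂ (x, R x t) * R x t * ρx) with hDxvdef
  set Dtv := -(4 * ρt / (R x t) ^ 3) * I2x
      + 2 / (R x t) ^ 2 * (J1 + F₂ (x, R x t) * R x t * ρt) with hDtvdef
  have hDxfull : HasDerivAt (fun x' => c₁ x' t * avgR R η x' t) Dxv x := by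
    have h := h2ρx.mul hI2
    have hfun : (fun x' => c₁ x' t * avgR R η x' t)
        =ᶠ[𝓝 x] fun x' => (2 / (R x' t) ^ 2) * ∫ r in (0:ℝ)..R x' t, F₂ (x', r) * r :=
      Eventually.of_forall fun x' => by simp only [avgR]; rw [hpull x']; ring
    have h2 := h.congr_of_eventuallyEq hfun
    convert h2 using 1
  have hDtfull : HasDerivAt (fun t' => c₁ x t' * avgR R η x t') Dtv t := by
    have h := h2ρt.mul hK2
    have hfun : (fun t' => c₁ x t' * avgR R η x t')
        =ᶠ[𝓝 t] fun t' => (2 / (R x t') ^ 2) * ∫ r in (0:ℝ)..R x t', Fk (t', r) * r :=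
      Eventually.of_forall fun t' => by simp only [avgR]; rw [hpullk t']; ring
    have h2 := h.congr_of_eventuallyEq hfun
    convert h2 using 1
  -- continuity facts in r
  have ccη : Continuous (fun r => η x r t) :=
    hη1.continuous.comp (continuous_const.prodMk (continuous_id.prodMk continuous_const))
  have ccVx : Continuous (fun r => Vx x r t) :=
    hVx.continuous.comp (continuous_const.prodMk (continuous_id.prodMk continuous_const))
  have ccVr : Continuous (fun r => Vr x r t) :=
    hVr.continuous.comp (continuous_const.prodMk (continuous_id.prodMk continuous_const))
  have cdFk : Continuous (fun r => fderiv ℝ Fk (t, r) (1, 0)) :=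
    (cont_partial hFkc (1, 0)).comp (continuous_const.prodMk continuous_id)
  have cdF2 : Continuous (fun r => fderiv ℝ F₂ (x, r) (1, 0)) :=
    (cont_partial hF₂c (1, 0)).comp (continuous_const.prodMk continuous_id)
  have cdF4 : Continuous (fun r => fderiv ℝ F₄ (x, r) (1, 0)) :=
    (cont_partial hF₄c (1, 0)).comp (continuous_const.prodMk continuous_id)
  have cdηr : Continuous (fun r => fderiv ℝ Fηr (t, r) (0, 1)) :=
    (cont_partial hFηrc (0, 1)).comp (continuous_const.prodMk continuous_id)
  have cdVr : Continuous (fun r => fderiv ℝ FVr (t, r) (0, 1)) :=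
    (cont_partial hFVrc (0, 1)).comp (continuous_const.prodMk continuous_id)
  -- the right-hand side of the PDE in explicit form
  set KK := deriv (fun x' => c₁ x' t * avgR R Vx x' t) x with hKKdef
  set Q : ℝ → ℝ := fun r => (fderiv ℝ Fk (t, r) (1, 0) - Dtv) + G₂ x t
      - (η x r t - avgR R η x t) * KK
      + Vx x r t * (fderiv ℝ F₂ (x, r) (1, 0) - Dxv)
      + Vr x r t * c₁ x t * fderiv ℝ Fηr (t, r) (0, 1) with hQdef
  have hQc : Continuous Q := by
    rw [hQdef]
    exact ((((cdFk.sub continuous_const).add continuous_const).sub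
      ((ccη.sub continuous_const).mul continuous_const)).add
      (ccVx.mul (cdF2.sub continuous_const))).add
      ((ccVr.mul continuous_const).mul cdηr)
  -- rewrite the PDE in explicit form
  have hpde' : ∀ r ∈ Ioo (0:ℝ) (R x t),
      D * (deriv (deriv (fun r' => W₂ x r' t)) r
        + (1 / r) * deriv (fun r' => W₂ x r' t) r) = Q r := by
    intro r hr
    have h0 := hpde x t r hr.1 hr.2
    have e_t : deriv (fun t' => c₁ x t' * (η x r t' - avgR R η x t')) t
        = fderiv ℝ Fk (t, r) (1, 0) - Dtv := by
      have hfe : (fun t' => c₁ x t' * (η x r t' - avgR R η x t'))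
          = fun t' => Fk (t', r) - c₁ x t' * avgR R η x t' := by
        funext t'; simp only [hFkdef]; ring
      rw [hfe]
      exact ((hasDerivAt_slice1 hFkc t r).sub hDtfull).deriv
    have e_x : deriv (fun x' => c₁ x' t * (η x' r t - avgR R η x' t)) x
        = fderiv ℝ F₂ (x, r) (1, 0) - Dxv := by
      have hfe : (fun x' => c₁ x' t * (η x' r t - avgR R η x' t))
          = fun x' => F₂ (x', r) - c₁ x' t * avgR R η x' t := by
        funext x'; simp only [hF₂def]; ring
      rw [hfe]
      exact ((hasDerivAt_slice1 hF₂c x r).sub hDxfull).deriv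
    have e_r : deriv (fun r' => η x r' t - avgR R η x t) r
        = fderiv ℝ Fηr (t, r) (0, 1) := by
      rw [deriv_sub_const]
      exact (hasDerivAt_slice2 hFηrc t r).deriv
    rw [e_t, e_x, e_r, ← hKKdef] at h0
    rw [hQdef]
    exact h0
  -- integrate the PDE against r dr : the left side vanishes
  have hQkey : ∫ r in (0:ℝ)..R x t, Q r * r = 0 :=
    ftc_zero hρ0 hD (hW₂smooth x t) (hW₂lim x t) (hW₂neu x t) hQc hpde'
  -- expand the integral of Q r * r
  set J3a := ∫ r in (0:ℝ)..R x t, Vx x r t * fderiv ℝ F₂ (x, r) (1, 0) * r with hJ3adef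
  set J5 := ∫ r in (0:ℝ)..R x t, Vr x r t * fderiv ℝ Fηr (t, r) (0, 1) * r with hJ5def
  have hid : ∫ r in (0:ℝ)..R x t, r = (R x t) ^ 2 / 2 := by
    rw [integral_id]; ring
  have cA1 : Continuous fun r : ℝ => fderiv ℝ Fk (t, r) (1, 0) * r := cdFk.mul continuous_id
  have cA2 : Continuous fun r : ℝ => -Dtv * r := continuous_const.mul continuous_id
  have cA3 : Continuous fun r : ℝ => G₂ x t * r := continuous_const.mul continuous_id
  have cA4 : Continuous fun r : ℝ => -KK * (η x r t * r) :=
    continuous_const.mul (ccη.mul continuous_id)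
  have cA5 : Continuous fun r : ℝ => KK * avgR R η x t * r := continuous_const.mul continuous_id
  have cA6 : Continuous fun r : ℝ => Vx x r t * fderiv ℝ F₂ (x, r) (1, 0) * r :=
    (ccVx.mul cdF2).mul continuous_id
  have cA7 : Continuous fun r : ℝ => -Dxv * (Vx x r t * r) :=
    continuous_const.mul (ccVx.mul continuous_id)
  have cA8 : Continuous fun r : ℝ => c₁ x t * (Vr x r t * fderiv ℝ Fηr (t, r) (0, 1) * r) :=
    continuous_const.mul ((ccVr.mul cdηr).mul continuous_id)
  have hsplit : ∀ r : ℝ, Q r * r = fderiv ℝ Fk (t, r) (1, 0) * r + (-Dtv * r + (G₂ x t * r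
      + (-KK * (η x r t * r) + (KK * avgR R η x t * r
      + (Vx x r t * fderiv ℝ F₂ (x, r) (1, 0) * r + (-Dxv * (Vx x r t * r)
      + c₁ x t * (Vr x r t * fderiv ℝ Fηr (t, r) (0, 1) * r))))))) := by
    intro r; rw [hQdef]; ring
  have hsum : ∫ r in (0:ℝ)..R x t, Q r * r
      = J1 - Dtv * ((R x t) ^ 2 / 2) + G₂ x t * ((R x t) ^ 2 / 2) - KK * Mη
        + KK * (avgR R η x t * ((R x t) ^ 2 / 2)) + J3a - Dxv * N + c₁ x t * J5 := by
    rw [intervalIntegral.integral_congr (fun r _ => hsplit r),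
      intervalIntegral.integral_add (cA1.intervalIntegrable 0 (R x t))
        ((cA2.fun_add (cA3.fun_add (cA4.fun_add (cA5.fun_add (cA6.fun_add (cA7.fun_add cA8)))))).intervalIntegrable
          0 (R x t)),
      intervalIntegral.integral_add (cA2.intervalIntegrable 0 (R x t))
        ((cA3.fun_add (cA4.fun_add (cA5.fun_add (cA6.fun_add (cA7.fun_add cA8))))).intervalIntegrable 0 (R x t)),
      intervalIntegral.integral_add (cA3.intervalIntegrable 0 (R x t))
        ((cA4.fun_add (cA5.fun_add (cA6.fun_add (cA7.fun_add cA8)))).intervalIntegrable 0 (R x t)),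
      intervalIntegral.integral_add (cA4.intervalIntegrable 0 (R x t))
        ((cA5.fun_add (cA6.fun_add (cA7.fun_add cA8))).intervalIntegrable 0 (R x t)),
      intervalIntegral.integral_add (cA5.intervalIntegrable 0 (R x t))
        ((cA6.fun_add (cA7.fun_add cA8)).intervalIntegrable 0 (R x t)),
      intervalIntegral.integral_add (cA6.intervalIntegrable 0 (R x t))
        ((cA7.fun_add cA8).intervalIntegrable 0 (R x t)),
      intervalIntegral.integral_add (cA7.intervalIntegrable 0 (R x t))
        (cA8.intervalIntegrable 0 (R x t)),
      intervalIntegral.integral_const_mul (-Dtv), intervalIntegral.integral_const_mul (G₂ x t),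
      intervalIntegral.integral_const_mul (-KK),
      intervalIntegral.integral_const_mul (KK * avgR R η x t),
      intervalIntegral.integral_const_mul (-Dxv), intervalIntegral.integral_const_mul (c₁ x t),
      hid, ← hMηdef, ← hNdef, ← hJ1def, ← hJ3adef, ← hJ5def]
    ring
  have hkeyE : 0 = J1 - Dtv * ((R x t) ^ 2 / 2) + G₂ x t * ((R x t) ^ 2 / 2) - KK * Mη
      + KK * (avgR R η x t * ((R x t) ^ 2 / 2)) + J3a - Dxv * N + c₁ x t * J5 := by
    rw [← hsum]; exact hQkey.symm
  -- integration by parts and incompressibility identities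
  set J6 := ∫ r in (0:ℝ)..R x t, η x r t * fderiv ℝ F₄ (x, r) (1, 0) * r with hJ6def
  have hu : ∀ r : ℝ, HasDerivAt (fun r' => r' * Vr x r' t)
      (1 * Vr x r t + r * fderiv ℝ FVr (t, r) (0, 1)) r :=
    fun r => (hasDerivAt_id r).mul (hasDerivAt_slice2 hFVrc t r)
  have cu' : Continuous fun r : ℝ => 1 * Vr x r t + r * fderiv ℝ FVr (t, r) (0, 1) :=
    (continuous_const.mul ccVr).add (continuous_id.mul cdVr)
  have hae : ∀ᵐ (r : ℝ) ∂(volume : Measure ℝ), r ≠ R x t := by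
    rw [MeasureTheory.ae_iff]
    rw [show {a : ℝ | ¬a ≠ R x t} = {R x t} from by ext a; simp]
    exact Real.volume_singleton
  have hptw_inc : ∀ r : ℝ, r ∈ Set.uIoc (0:ℝ) (R x t) → r ≠ R x t →
      1 * Vr x r t + r * fderiv ℝ FVr (t, r) (0, 1) = -(fderiv ℝ F₄ (x, r) (1, 0) * r) := by
    intro r hrmem hne
    rw [Set.uIoc_of_le hρ0.le] at hrmem
    have hrlt : r < R x t := lt_of_le_of_ne hrmem.2 hne
    have hinc := hincomp x t r hrmem.1 hrlt
    have hder : deriv (fun r' => r' * Vr x r' t) r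
        = 1 * Vr x r t + r * fderiv ℝ FVr (t, r) (0, 1) := (hu r).deriv
    have hderx : deriv (fun x' => Vx x' r t) x = fderiv ℝ F₄ (x, r) (1, 0) :=
      (hasDerivAt_slice1 hF₄c x r).deriv
    rw [hder, hderx] at hinc
    linear_combination hinc
  have hftcu : ∫ r in (0:ℝ)..R x t, (1 * Vr x r t + r * fderiv ℝ FVr (t, r) (0, 1))
      = R x t * Vr x (R x t) t - 0 * Vr x 0 t :=
    intervalIntegral.integral_eq_sub_of_hasDerivAt (fun r _ => hu r)
      (cu'.intervalIntegrable 0 (R x t))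
  have hJ4eq : J4i = -(R x t * Vr x (R x t) t) := by
    rw [hJ4idef]
    rw [intervalIntegral.integral_congr_ae (by
      filter_upwards [hae] with r hne hrmem
      rw [hptw_inc r hrmem hne]
      ring : ∀ᵐ (r : ℝ) ∂(volume : Measure ℝ), r ∈ Set.uIoc (0:ℝ) (R x t) →
        fderiv ℝ F₄ (x, r) (1, 0) * r
          = -(1 * Vr x r t + r * fderiv ℝ FVr (t, r) (0, 1)))]
    rw [intervalIntegral.integral_neg, hftcu]
    ring
  have hJ5eq : J5 = R x t * Vr x (R x t) t * η x (R x t) t + J6 := by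
    have hv : ∀ r : ℝ, HasDerivAt (fun r' => η x r' t) (fderiv ℝ Fηr (t, r) (0, 1)) r :=
      fun r => hasDerivAt_slice2 hFηrc t r
    have hparts := intervalIntegral.integral_mul_deriv_eq_deriv_mul
      (u := fun r' => r' * Vr x r' t) (v := fun r' => η x r' t)
      (u' := fun r => 1 * Vr x r t + r * fderiv ℝ FVr (t, r) (0, 1))
      (v' := fun r => fderiv ℝ Fηr (t, r) (0, 1))
      (fun r _ => hu r) (fun r _ => hv r)
      (cu'.intervalIntegrable 0 (R x t)) (cdηr.intervalIntegrable 0 (R x t))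
    have h1 : J5 = ∫ r in (0:ℝ)..R x t, (r * Vr x r t) * fderiv ℝ Fηr (t, r) (0, 1) := by
      rw [hJ5def]
      exact intervalIntegral.integral_congr fun r _ => by ring
    have h2 : ∫ r in (0:ℝ)..R x t,
        (1 * Vr x r t + r * fderiv ℝ FVr (t, r) (0, 1)) * η x r t = -J6 := by
      rw [hJ6def, ← intervalIntegral.integral_neg]
      apply intervalIntegral.integral_congr_ae
      filter_upwards [hae] with r hne hrmem
      rw [hptw_inc r hrmem hne]
      ring
    rw [h1, hparts, h2]
    ring
  have hJ3split : J3i = J3a + c₁ x t * J6 := by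
    have hptw : ∀ r : ℝ, fderiv ℝ F₃ (x, r) (1, 0)
        = fderiv ℝ F₂ (x, r) (1, 0) * Vx x r t
          + c₁ x t * η x r t * fderiv ℝ F₄ (x, r) (1, 0) := by
      intro r
      have hm := (hasDerivAt_slice1 hF₂c x r).mul (hasDerivAt_slice1 hF₄c x r)
      have h3 : HasDerivAt (fun a => F₂ (a, r) * F₄ (a, r)) (fderiv ℝ F₃ (x, r) (1, 0)) x :=
        hasDerivAt_slice1 hF₃c x r
      have huniq := h3.unique hm
      rw [huniq]
    rw [hJ3idef, hJ3adef, hJ6def]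
    rw [intervalIntegral.integral_congr (fun r (_ : r ∈ Set.uIcc (0:ℝ) (R x t)) =>
      (by rw [hptw r]; ring : fderiv ℝ F₃ (x, r) (1, 0) * r
        = Vx x r t * fderiv ℝ F₂ (x, r) (1, 0) * r
          + c₁ x t * (η x r t * fderiv ℝ F₄ (x, r) (1, 0) * r)))]
    have cB : Continuous fun r : ℝ => c₁ x t * (η x r t * fderiv ℝ F₄ (x, r) (1, 0) * r) :=
      continuous_const.mul ((ccη.mul cdF4).mul continuous_id)
    rw [intervalIntegral.integral_add (cA6.intervalIntegrable 0 (R x t))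
      (cB.intervalIntegrable 0 (R x t)),
      intervalIntegral.integral_const_mul]
  -- the derivative of the target function
  have hDb : HasDerivAt (fun x' => 2 / (R x' t) ^ 2 * ∫ r in (0:ℝ)..R x' t, F₄ (x', r) * r)
      (-(4 * ρx / (R x t) ^ 3) * N
        + 2 / (R x t) ^ 2 * (J4i + F₄ (x, R x t) * R x t * ρx)) x := h2ρx.mul hI4
  have h2I2 : HasDerivAt (fun x' => 2 * ∫ r in (0:ℝ)..R x' t, F₂ (x', r) * r)
      (2 * (J2 + F₂ (x, R x t) * R x t * ρx)) x := hI2.const_mul 2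
  have h2I3 : HasDerivAt (fun x' => 2 * ∫ r in (0:ℝ)..R x' t, F₃ (x', r) * r)
      (2 * (J3i + F₃ (x, R x t) * R x t * ρx)) x := hI3.const_mul 2
  have hT : HasDerivAt (fun x' => 2 * (∫ r in (0:ℝ)..R x' t, F₃ (x', r) * r)
      - 2 / (R x' t) ^ 2 * (∫ r in (0:ℝ)..R x' t, F₄ (x', r) * r)
        * (2 * ∫ r in (0:ℝ)..R x' t, F₂ (x', r) * r))
      (2 * (J3i + F₃ (x, R x t) * R x t * ρx)
        - ((-(4 * ρx / (R x t) ^ 3) * N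
            + 2 / (R x t) ^ 2 * (J4i + F₄ (x, R x t) * R x t * ρx)) * (2 * I2x)
          + 2 / (R x t) ^ 2 * N * (2 * (J2 + F₂ (x, R x t) * R x t * ρx)))) x :=
    h2I3.sub (hDb.mul h2I2)
  have hfunT : ∀ x', c₁ x' t
      * (2 * ∫ r in (0:ℝ)..R x' t, η x' r t * (Vx x' r t - avgR R Vx x' t) * r)
      = 2 * (∫ r in (0:ℝ)..R x' t, F₃ (x', r) * r)
        - 2 / (R x' t) ^ 2 * (∫ r in (0:ℝ)..R x' t, F₄ (x', r) * r)
          * (2 * ∫ r in (0:ℝ)..R x' t, F₂ (x', r) * r) := by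
    intro x'
    have cη' : Continuous fun r => η x' r t :=
      hη1.continuous.comp (continuous_const.prodMk (continuous_id.prodMk continuous_const))
    have cVx' : Continuous fun r => Vx x' r t :=
      hVx.continuous.comp (continuous_const.prodMk (continuous_id.prodMk continuous_const))
    have h1 : ∫ r in (0:ℝ)..R x' t, η x' r t * (Vx x' r t - avgR R Vx x' t) * r
        = (∫ r in (0:ℝ)..R x' t, η x' r t * Vx x' r t * r)
          - avgR R Vx x' t * ∫ r in (0:ℝ)..R x' t, η x' r t * r := by
      have cC : Continuous fun r : ℝ => η x' r t * Vx x' r t * r :=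
        (cη'.mul cVx').mul continuous_id
      have cD : Continuous fun r : ℝ => avgR R Vx x' t * (η x' r t * r) :=
        continuous_const.mul (cη'.mul continuous_id)
      rw [← intervalIntegral.integral_const_mul, ← intervalIntegral.integral_sub
        (cC.intervalIntegrable 0 (R x' t)) (cD.intervalIntegrable 0 (R x' t))]
      exact intervalIntegral.integral_congr fun r _ => by ring
    have h2 : c₁ x' t * ∫ r in (0:ℝ)..R x' t, η x' r t * Vx x' r t * r
        = ∫ r in (0:ℝ)..R x' t, F₃ (x', r) * r := by
      rw [← intervalIntegral.integral_const_mul]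
      exact intervalIntegral.integral_congr fun r _ => by simp only [hF₃def]; ring
    have h3 : c₁ x' t * ∫ r in (0:ℝ)..R x' t, η x' r t * r
        = ∫ r in (0:ℝ)..R x' t, F₂ (x', r) * r := (hpull x').symm
    have h4 : avgR R Vx x' t = 2 / (R x' t) ^ 2 * ∫ r in (0:ℝ)..R x' t, F₄ (x', r) * r := by
      simp only [avgR]
      rfl
    rw [h1, h4]
    linear_combination 2 * h2
      - (2 * (2 / (R x' t) ^ 2 * ∫ r in (0:ℝ)..R x' t, F₄ (x', r) * r)) * h3
  have hTarget : HasDerivAt (fun x' => c₁ x' t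
      * (2 * ∫ r in (0:ℝ)..R x' t, η x' r t * (Vx x' r t - avgR R Vx x' t) * r))
      (2 * (J3i + F₃ (x, R x t) * R x t * ρx)
        - ((-(4 * ρx / (R x t) ^ 3) * N
            + 2 / (R x t) ^ 2 * (J4i + F₄ (x, R x t) * R x t * ρx)) * (2 * I2x)
          + 2 / (R x t) ^ 2 * N * (2 * (J2 + F₂ (x, R x t) * R x t * ρx)))) x :=
    hT.congr_of_eventuallyEq (Eventually.of_forall hfunT)
  rw [hTarget.deriv]
  have haval : avgR R η x t = 2 * Mη / (R x t) ^ 2 := by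
    simp only [avgR]
    rw [← hMηdef]
    ring
  exact final_algebra J1 J2 J3i J3a J4i J5 J6 N Mη I2x (c₁ x t) (R x t) ρx ρt
    (η x (R x t) t) (Vx x (R x t) t) (Vr x (R x t) t)
    (F₂ (x, R x t)) (F₃ (x, R x t)) (F₄ (x, R x t)) KK (avgR R η x t) (G₂ x t) Dtv Dxv
    _ hρne (hstream x t) haval hI2cM hF2R hF3R hF4R hJ3split hJ4eq hJ5eq
    hDtvdef hDxvdef rfl hkeyE
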